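/- arXiv:2504.13935 — 3 statements merged into one kernel-verified Lean document; each statement's English description precedes it below -/
import Mathlib

section
/- For μ < 0 < b, σ > 0, and a natural number n, ∫₀^b u^n exp(−(u−μ)²/(2σ²)) du = Σ_{k=0}^{n} C(n,k) μ^(n−k) σ^(k+1) 2^((k−1)/2) [ γ((k+1)/2, (b−μ)²/(2σ²)) − γ((k+1)/2, μ²/(2σ²)) ]. -/
open MeasureTheory intervalIntegral Real Finset

/-- The lower incomplete gamma function `γ(s,x) = ∫₀ˣ t^(s−1) e^(−t) dt`. -/
noncomputable def lowerGamma (s x : ℝ) : ℝ :=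
  ∫ t in (0:ℝ)..x, t ^ (s - 1) * Real.exp (-t)


lemma key_id (σ x : ℝ) (hσ : 0 < σ) (hx : 0 < x) (k : ℕ) :
    (x / σ ^ 2) * ((x ^ 2 / (2 * σ ^ 2)) ^ (((k:ℝ) + 1) / 2 - 1)
        * Real.exp (-(x ^ 2 / (2 * σ ^ 2))))
      = x ^ k * Real.exp (-(x ^ 2 / (2 * σ ^ 2)))
          / (σ ^ (k + 1) * (2:ℝ) ^ (((k:ℝ) - 1) / 2)) := by
  have h2σ : (0:ℝ) < 2 * σ ^ 2 := by positivity
  have he : ((k:ℝ) + 1) / 2 - 1 = ((k:ℝ) - 1) / 2 := by ring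
  rw [he, Real.div_rpow (by positivity) h2σ.le,
    Real.mul_rpow (by norm_num) (by positivity)]
  have hx2 : ((x ^ 2 : ℝ)) ^ (((k:ℝ) - 1) / 2) = x ^ (k:ℝ) / x := by
    rw [← Real.rpow_natCast x 2, ← Real.rpow_mul hx.le,
      show ((2:ℕ):ℝ) * (((k:ℝ) - 1) / 2) = (k:ℝ) - 1 by push_cast; ring,
      Real.rpow_sub hx, Real.rpow_one]
  have hσ2 : ((σ ^ 2 : ℝ)) ^ (((k:ℝ) - 1) / 2) = σ ^ (k:ℝ) / σ := by
    rw [← Real.rpow_natCast σ 2, ← Real.rpow_mul hσ.le,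
      show ((2:ℕ):ℝ) * (((k:ℝ) - 1) / 2) = (k:ℝ) - 1 by push_cast; ring,
      Real.rpow_sub hσ, Real.rpow_one]
  rw [hx2, hσ2, Real.rpow_natCast, Real.rpow_natCast]
  have h2 : (0:ℝ) < (2:ℝ) ^ (((k:ℝ) - 1) / 2) := by positivity
  field_simp
  ring

lemma lemA (σ c : ℝ) (hσ : 0 < σ) (hc : 0 < c) (k : ℕ) :
    ∫ u in (0:ℝ)..c, u ^ k * Real.exp (-u ^ 2 / (2 * σ ^ 2))
      = σ ^ (k + 1) * (2:ℝ) ^ (((k:ℝ) - 1) / 2)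
          * lowerGamma (((k:ℝ) + 1) / 2) (c ^ 2 / (2 * σ ^ 2)) := by
  set s : ℝ := ((k:ℝ) + 1) / 2 with hs
  have hspos : 0 < s := by positivity
  set f : ℝ → ℝ := fun x => x ^ 2 / (2 * σ ^ 2) with hf_def
  set g : ℝ → ℝ := fun t => t ^ (s - 1) * Real.exp (-t) with hg_def
  have h2σ : (0:ℝ) < 2 * σ ^ 2 := by positivity
  have hK : (0:ℝ) < σ ^ (k + 1) * (2:ℝ) ^ (((k:ℝ) - 1) / 2) := by positivity
  -- hypotheses for change of variables
  have hf : ContinuousOn f (Set.uIcc 0 c) := by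
    apply Continuous.continuousOn; fun_prop
  have hff' : ∀ x ∈ Set.Ioo (min 0 c) (max 0 c),
      HasDerivWithinAt f (x / σ ^ 2) (Set.Ioi x) x := by
    intro x _
    have : HasDerivAt f (x / σ ^ 2) x := by
      have h := (hasDerivAt_pow 2 x).div_const (2 * σ ^ 2)
      refine h.congr_deriv ?_
      field_simp
      ring
    exact this.hasDerivWithinAt
  have himage : f '' Set.uIcc 0 c ⊆ Set.Icc 0 (c ^ 2 / (2 * σ ^ 2)) := by
    rintro t ⟨x, hx, rfl⟩
    rw [Set.uIcc_of_le hc.le] at hx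
    constructor
    · positivity
    · show x ^ 2 / (2 * σ ^ 2) ≤ c ^ 2 / (2 * σ ^ 2)
      gcongr
      · exact hx.1
      · exact hx.2
  have hg1 : IntegrableOn g (f '' Set.uIcc 0 c) := by
    apply IntegrableOn.mono_set _ himage
    rw [integrableOn_Icc_iff_integrableOn_Ioc]
    apply IntegrableOn.mono_set _ Set.Ioc_subset_Ioi_self
    exact ((Real.GammaIntegral_convergent hspos).congr_fun
      (fun x _ => by rw [hg_def]; ring) measurableSet_Ioi)
  have hg_cont : ContinuousOn g (f '' Set.Ioo (min 0 c) (max 0 c)) := by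
    intro t ht
    obtain ⟨x, hx, rfl⟩ := ht
    rw [min_eq_left hc.le, max_eq_right hc.le] at hx
    have hfx : 0 < f x := by
      have := hx.1
      positivity
    apply ContinuousAt.continuousWithinAt
    exact ((Real.continuousAt_rpow_const _ _ (Or.inl hfx.ne')).mul
      ((Real.continuous_exp.continuousAt).comp (continuousAt_neg)))
  have hcongr : ∀ x ∈ Set.Ioc (0:ℝ) c,
      (x / σ ^ 2) • g (f x)
        = x ^ k * Real.exp (-x ^ 2 / (2 * σ ^ 2))
            / (σ ^ (k + 1) * (2:ℝ) ^ (((k:ℝ) - 1) / 2)) := by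
    intro x hx
    have := key_id σ x hσ hx.1 k
    rw [smul_eq_mul, hg_def, hf_def, hs]
    simp only [neg_div] at this ⊢
    exact this
  have hg2 : IntegrableOn (fun x => (x / σ ^ 2) • (g ∘ f) x) (Set.uIcc 0 c) := by
    rw [Set.uIcc_of_le hc.le]
    have hcont : Continuous fun x : ℝ =>
        x ^ k * Real.exp (-x ^ 2 / (2 * σ ^ 2))
          / (σ ^ (k + 1) * (2:ℝ) ^ (((k:ℝ) - 1) / 2)) := by fun_prop
    apply (hcont.integrableOn_Icc).congr_fun_ae
    rw [Filter.EventuallyEq]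
    have h0 : ∀ᵐ x : ℝ, x ≠ 0 := by
      rw [MeasureTheory.ae_iff]
      have hset : {x : ℝ | ¬ x ≠ 0} = {0} := by ext x; simp
      rw [hset]; exact measure_singleton 0
    filter_upwards [ae_restrict_mem measurableSet_Icc, ae_restrict_of_ae h0]
      with x hxI hx0
    exact (hcongr x ⟨lt_of_le_of_ne hxI.1 (Ne.symm hx0), hxI.2⟩).symm
  have hsub := intervalIntegral.integral_comp_smul_deriv''' hf hff' hg_cont hg1 hg2
  have hf0 : f 0 = 0 := by simp [hf_def]
  have hfc : f c = c ^ 2 / (2 * σ ^ 2) := rfl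
  rw [hf0, hfc] at hsub
  have heq : (∫ x in (0:ℝ)..c, (x / σ ^ 2) • (g ∘ f) x)
      = ∫ x in (0:ℝ)..c, x ^ k * Real.exp (-x ^ 2 / (2 * σ ^ 2))
          / (σ ^ (k + 1) * (2:ℝ) ^ (((k:ℝ) - 1) / 2)) := by
    refine intervalIntegral.integral_congr_ae (Filter.Eventually.of_forall fun x hx => ?_)
    rw [Set.uIoc_of_le hc.le] at hx
    exact hcongr x hx
  rw [heq, intervalIntegral.integral_div] at hsub
  rw [show lowerGamma s (c ^ 2 / (2 * σ ^ 2))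
      = ∫ u in (0:ℝ)..(c ^ 2 / (2 * σ ^ 2)), g u from rfl, ← hsub]
  field_simp

/-- For `μ < 0 < b`, `σ > 0` and `n : ℕ`,
`∫₀^b uⁿ exp(−(u−μ)²/(2σ²)) du
  = Σ_{k=0}^{n} C(n,k) μ^(n−k) σ^(k+1) 2^((k−1)/2)
    [γ((k+1)/2, (b−μ)²/(2σ²)) − γ((k+1)/2, μ²/(2σ²))]`. -/
theorem gaussian_moment_mu_neg (μ σ b : ℝ) (hμ : μ < 0) (hb : 0 < b)
    (hσ : 0 < σ) (n : ℕ) :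
    ∫ u in (0:ℝ)..b, u ^ n * Real.exp (-(u - μ) ^ 2 / (2 * σ ^ 2))
      = ∑ k ∈ Finset.range (n + 1),
          (n.choose k : ℝ) * μ ^ (n - k) * σ ^ (k + 1)
            * (2 : ℝ) ^ (((k : ℝ) - 1) / 2)
            * (lowerGamma (((k : ℝ) + 1) / 2) ((b - μ) ^ 2 / (2 * σ ^ 2))
               - lowerGamma (((k : ℝ) + 1) / 2) (μ ^ 2 / (2 * σ ^ 2))) := by
  set F : ℝ → ℝ := fun v => (v + μ) ^ n * Real.exp (-v ^ 2 / (2 * σ ^ 2)) with hF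
  have hFcont : Continuous F := by fun_prop
  -- shift
  have hshift : (∫ u in (0:ℝ)..b, u ^ n * Real.exp (-(u - μ) ^ 2 / (2 * σ ^ 2)))
      = ∫ v in (0:ℝ) - μ..b - μ, F v := by
    rw [← intervalIntegral.integral_comp_sub_right F μ]
    refine intervalIntegral.integral_congr fun u _ => ?_
    simp only [hF, sub_add_cancel]
  -- split
  have hsplit : (∫ v in (0:ℝ) - μ..b - μ, F v)
      = (∫ v in (0:ℝ)..b - μ, F v) - ∫ v in (0:ℝ)..(0 - μ), F v := by
    rw [intervalIntegral.integral_interval_sub_left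
      (hFcont.intervalIntegrable _ _) (hFcont.intervalIntegrable _ _)]
  -- expansion lemma
  have hexp : ∀ c : ℝ, 0 < c → (∫ v in (0:ℝ)..c, F v)
      = ∑ k ∈ Finset.range (n + 1),
          (n.choose k : ℝ) * μ ^ (n - k) * σ ^ (k + 1)
            * (2 : ℝ) ^ (((k : ℝ) - 1) / 2)
            * lowerGamma (((k : ℝ) + 1) / 2) (c ^ 2 / (2 * σ ^ 2)) := by
    intro c hc
    have hpt : ∀ v : ℝ, F v
        = ∑ k ∈ Finset.range (n + 1),
            (n.choose k : ℝ) * μ ^ (n - k)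
              * (v ^ k * Real.exp (-v ^ 2 / (2 * σ ^ 2))) := by
      intro v
      rw [hF]
      simp only
      rw [add_pow, Finset.sum_mul]
      refine Finset.sum_congr rfl fun k hk => ?_
      push_cast
      ring
    rw [intervalIntegral.integral_congr (fun v _ => hpt v),
      intervalIntegral.integral_finset_sum
        (fun k _ => (by fun_prop : Continuous fun v : ℝ =>
          (n.choose k : ℝ) * μ ^ (n - k)
            * (v ^ k * Real.exp (-v ^ 2 / (2 * σ ^ 2)))).intervalIntegrable _ _)]
    refine Finset.sum_congr rfl fun k hk => ?_
    rw [intervalIntegral.integral_const_mul, lemA σ c hσ hc k]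
    ring
  have hμ' : (0:ℝ) < 0 - μ := by linarith
  have hbμ : (0:ℝ) < b - μ := by linarith
  rw [hshift, hsplit, hexp _ hbμ, hexp _ hμ', ← Finset.sum_sub_distrib]
  refine Finset.sum_congr rfl fun k hk => ?_
  rw [show (0:ℝ) - μ = -μ by ring, neg_pow, show ((-1:ℝ)) ^ 2 = 1 by norm_num]
  ring
end

section
/- For 0 < μ < b, σ > 0, and a natural number n, ∫₀^b u^n exp(−(u−μ)²/(2σ²)) du = Σ_{k=0}^{n} C(n,k) μ^(n−k) σ^(k+1) 2^((k−1)/2) [ γ((k+1)/2, (b−μ)²/(2σ²)) + (−1)^k γ((k+1)/2, μ²/(2σ²)) ]. -/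
open MeasureTheory intervalIntegral Real Finset

lemma key_integral (σ : ℝ) (hσ : 0 < σ) (k : ℕ) (c : ℝ) (hc : 0 < c) :
    ∫ x in (0:ℝ)..c, x ^ k * Real.exp (-x ^ 2 / (2 * σ ^ 2))
      = σ ^ (k + 1) * (2 : ℝ) ^ (((k : ℝ) - 1) / 2)
        * lowerGamma (((k : ℝ) + 1) / 2) (c ^ 2 / (2 * σ ^ 2)) := by
  set y : ℝ := c ^ 2 / (2 * σ ^ 2) with hy
  have hy0 : 0 < y := by positivity
  have h2σ : (0:ℝ) < 2 * σ ^ 2 := by positivity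
  set f : ℝ → ℝ := fun x => x ^ 2 / (2 * σ ^ 2) with hf
  have hf0 : f 0 = 0 := by simp [hf]
  have hfc : f c = y := rfl
  have hmono : StrictMonoOn f (Set.Icc 0 c) := by
    intro a ha b hb hab
    exact div_lt_div_of_pos_right (pow_lt_pow_left₀ hab ha.1 two_ne_zero) h2σ
  have himg : f '' Set.Ioo 0 c = Set.Ioo 0 y := by
    apply Set.Subset.antisymm
    · have := hmono.image_Ioo_subset
      rwa [hf0, hfc] at this
    · have hcont : ContinuousOn f (Set.Icc 0 c) := by fun_prop
      have := intermediate_value_Ioo hc.le hcont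
      rwa [hf0, hfc] at this
  have hderiv : ∀ x ∈ Set.Ioo (0:ℝ) c, HasDerivWithinAt f (x / σ ^ 2) (Set.Ioo 0 c) x := by
    intro x _
    have h : HasDerivAt f (x / σ ^ 2) x := by
      have h := (hasDerivAt_pow 2 x).div_const (2 * σ ^ 2)
      rw [show x / σ ^ 2 = ((2:ℕ):ℝ) * x ^ (2 - 1) / (2 * σ ^ 2) by push_cast; ring]
      exact h
    exact h.hasDerivWithinAt
  have hinj : Set.InjOn f (Set.Ioo 0 c) := hmono.injOn.mono Set.Ioo_subset_Icc_self
  have hsub := integral_image_eq_integral_abs_deriv_smul measurableSet_Ioo hderiv hinj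
    (fun t => t ^ (((k : ℝ) + 1) / 2 - 1) * Real.exp (-t))
  rw [himg] at hsub
  rw [lowerGamma, intervalIntegral.integral_of_le hy0.le, integral_Ioc_eq_integral_Ioo, hsub,
    intervalIntegral.integral_of_le hc.le, integral_Ioc_eq_integral_Ioo,
    ← MeasureTheory.integral_const_mul]
  apply setIntegral_congr_fun measurableSet_Ioo
  intro x hx
  have hx0 : 0 < x := hx.1
  have hsq2 : (0:ℝ) < Real.sqrt 2 := by positivity
  simp only [smul_eq_mul]
  have habs : |x / σ ^ 2| = x / σ ^ 2 := abs_of_pos (by positivity)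
  rw [habs]
  have hw : f x = (x / (σ * Real.sqrt 2)) ^ 2 := by
    rw [div_pow, mul_pow, Real.sq_sqrt (by norm_num : (0:ℝ) ≤ 2)]
    simp only [hf]
    ring
  set w : ℝ := x / (σ * Real.sqrt 2) with hwdef
  have hw0 : 0 < w := by positivity
  have hrw : (f x) ^ (((k : ℝ) + 1) / 2 - 1) = w ^ k / w := by
    rw [hw, ← Real.rpow_natCast w 2, ← Real.rpow_mul hw0.le,
      ← Real.rpow_natCast w k, ← Real.rpow_sub_one hw0.ne']
    congr 1
    push_cast
    ring
  have h2r : (2 : ℝ) ^ (((k : ℝ) - 1) / 2) = Real.sqrt 2 ^ k / Real.sqrt 2 := by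
    rw [Real.sqrt_eq_rpow, ← Real.rpow_natCast ((2:ℝ) ^ ((1:ℝ)/2)) k,
      ← Real.rpow_mul (by norm_num : (0:ℝ) ≤ 2),
      ← Real.rpow_sub two_pos]
    congr 1; ring
  rw [hrw, h2r]
  have hexp : rexp (-f x) = rexp (-x ^ 2 / (2 * σ ^ 2)) := by
    simp only [hf, neg_div]
  rw [hexp]
  have hwk : w ^ k = x ^ k / (σ ^ k * Real.sqrt 2 ^ k) := by
    rw [hwdef, div_pow, mul_pow]
  rw [hwk]
  have hσ' : σ ≠ 0 := hσ.ne'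
  have hx' : x ≠ 0 := hx0.ne'
  have hs2 : Real.sqrt 2 ≠ 0 := hsq2.ne'
  have hsq : Real.sqrt 2 ^ 2 = 2 := Real.sq_sqrt (by norm_num)
  have hσc : σ * σ⁻¹ = 1 := mul_inv_cancel₀ hσ'
  have hsc : Real.sqrt 2 * (Real.sqrt 2)⁻¹ = 1 := mul_inv_cancel₀ hs2
  rw [hwdef]
  field_simp
  ring_nf

/-- For `0 < μ < b`, `σ > 0` and `n : ℕ`,
`∫₀^b uⁿ exp(−(u−μ)²/(2σ²)) du
  = Σ_{k=0}^{n} C(n,k) μ^(n−k) σ^(k+1) 2^((k−1)/2)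
    [γ((k+1)/2, (b−μ)²/(2σ²)) + (−1)^k γ((k+1)/2, μ²/(2σ²))]`. -/
theorem gaussian_moment_mu_mid (μ σ b : ℝ) (hμ : 0 < μ) (hb : μ < b)
    (hσ : 0 < σ) (n : ℕ) :
    ∫ u in (0:ℝ)..b, u ^ n * Real.exp (-(u - μ) ^ 2 / (2 * σ ^ 2))
      = ∑ k ∈ Finset.range (n + 1),
          (n.choose k : ℝ) * μ ^ (n - k) * σ ^ (k + 1)
            * (2 : ℝ) ^ (((k : ℝ) - 1) / 2)
            * (lowerGamma (((k : ℝ) + 1) / 2) ((b - μ) ^ 2 / (2 * σ ^ 2))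
               + (-1 : ℝ) ^ k
                 * lowerGamma (((k : ℝ) + 1) / 2) (μ ^ 2 / (2 * σ ^ 2))) := by
  have hcont : ∀ m : ℕ, Continuous fun x : ℝ => x ^ m * Real.exp (-x ^ 2 / (2 * σ ^ 2)) := by
    intro m; fun_prop
  have hsplit : ∫ u in (0:ℝ)..b, u ^ n * Real.exp (-(u - μ) ^ 2 / (2 * σ ^ 2))
      = (∫ u in (0:ℝ)..μ, u ^ n * Real.exp (-(u - μ) ^ 2 / (2 * σ ^ 2)))
        + ∫ u in μ..b, u ^ n * Real.exp (-(u - μ) ^ 2 / (2 * σ ^ 2)) := by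
    rw [intervalIntegral.integral_add_adjacent_intervals] <;>
      exact ((by fun_prop : Continuous fun u : ℝ =>
        u ^ n * Real.exp (-(u - μ) ^ 2 / (2 * σ ^ 2)))).intervalIntegrable _ _
  have h1 : (∫ u in (0:ℝ)..μ, u ^ n * Real.exp (-(u - μ) ^ 2 / (2 * σ ^ 2)))
      = ∫ x in (0:ℝ)..μ, (μ - x) ^ n * Real.exp (-x ^ 2 / (2 * σ ^ 2)) := by
    have h := intervalIntegral.integral_comp_sub_left (a := (0:ℝ)) (b := μ)
      (fun u => u ^ n * Real.exp (-(u - μ) ^ 2 / (2 * σ ^ 2))) μ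
    simp only [sub_self, sub_zero] at h
    rw [← h]
    apply intervalIntegral.integral_congr
    intro x _
    ring_nf
  have h2 : (∫ u in μ..b, u ^ n * Real.exp (-(u - μ) ^ 2 / (2 * σ ^ 2)))
      = ∫ x in (0:ℝ)..(b - μ), (μ + x) ^ n * Real.exp (-x ^ 2 / (2 * σ ^ 2)) := by
    have h := intervalIntegral.integral_comp_add_right (a := (0:ℝ)) (b := b - μ)
      (fun u => u ^ n * Real.exp (-(u - μ) ^ 2 / (2 * σ ^ 2))) μ
    simp only [zero_add, sub_add_cancel] at h
    rw [← h]
    apply intervalIntegral.integral_congr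
    intro x _
    ring_nf
  have hexp1 : ∀ c : ℝ, (∫ x in (0:ℝ)..c, (μ - x) ^ n * Real.exp (-x ^ 2 / (2 * σ ^ 2)))
      = ∑ k ∈ Finset.range (n + 1), (n.choose k : ℝ) * μ ^ (n - k) * (-1 : ℝ) ^ k
          * ∫ x in (0:ℝ)..c, x ^ k * Real.exp (-x ^ 2 / (2 * σ ^ 2)) := by
    intro c
    simp only [← intervalIntegral.integral_const_mul]
    rw [← intervalIntegral.integral_finset_sum]
    · apply intervalIntegral.integral_congr
      intro x _
      dsimp only
      rw [sub_eq_add_neg, add_comm, add_pow, Finset.sum_mul]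
      apply Finset.sum_congr rfl
      intro k _
      rw [neg_pow]
      ring
    · intro k _
      exact (by fun_prop : Continuous fun x : ℝ => (n.choose k : ℝ) * μ ^ (n - k)
        * (-1 : ℝ) ^ k * (x ^ k * Real.exp (-x ^ 2 / (2 * σ ^ 2)))).intervalIntegrable _ _
  have hexp2 : (∫ x in (0:ℝ)..(b - μ), (μ + x) ^ n * Real.exp (-x ^ 2 / (2 * σ ^ 2)))
      = ∑ k ∈ Finset.range (n + 1), (n.choose k : ℝ) * μ ^ (n - k)
          * ∫ x in (0:ℝ)..(b - μ), x ^ k * Real.exp (-x ^ 2 / (2 * σ ^ 2)) := by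
    simp only [← intervalIntegral.integral_const_mul]
    rw [← intervalIntegral.integral_finset_sum]
    · apply intervalIntegral.integral_congr
      intro x _
      dsimp only
      rw [add_comm, add_pow, Finset.sum_mul]
      apply Finset.sum_congr rfl
      intro k _
      ring
    · intro k _
      exact (by fun_prop : Continuous fun x : ℝ => (n.choose k : ℝ) * μ ^ (n - k)
        * (x ^ k * Real.exp (-x ^ 2 / (2 * σ ^ 2)))).intervalIntegrable _ _
  rw [hsplit, h1, h2, hexp1 μ, hexp2, ← Finset.sum_add_distrib]
  apply Finset.sum_congr rfl
  intro k _
  rw [key_integral σ hσ k μ hμ, key_integral σ hσ k (b - μ) (by linarith)]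
  ring
end

section
/- For 0 < b < μ, σ > 0, and a natural number n, ∫₀^b u^n exp(−(u−μ)²/(2σ²)) du = Σ_{k=0}^{n} C(n,k) μ^(n−k) σ^(k+1) 2^((k−1)/2) (−1)^k [ γ((k+1)/2, μ²/(2σ²)) − γ((k+1)/2, (b−μ)²/(2σ²)) ]. -/
open MeasureTheory intervalIntegral Real Finset

lemma gammaKernel_intervalIntegrable {r : ℝ} (hr : (-1:ℝ) < r) {x : ℝ} (hx : 0 ≤ x) :
    IntervalIntegrable (fun t : ℝ => t ^ r * Real.exp (-t)) volume 0 x := by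
  apply (intervalIntegral.intervalIntegrable_rpow' hr (a := 0) (b := x)).mono_fun
  · exact (by fun_prop : Measurable (fun t : ℝ => t ^ r * Real.exp (-t))).aestronglyMeasurable
  · rw [Set.uIoc_of_le hx]
    filter_upwards [ae_restrict_mem measurableSet_Ioc] with t ht
    have ht0 : 0 < t := ht.1
    have h1 : (0:ℝ) ≤ t ^ r := Real.rpow_nonneg ht0.le r
    have h2 : Real.exp (-t) ≤ 1 := Real.exp_le_one_iff.2 (by linarith)
    simp only [Real.norm_eq_abs, abs_mul, abs_of_nonneg h1,
      abs_of_pos (Real.exp_pos (-t))]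
    nlinarith [Real.exp_pos (-t)]

lemma moment_eq (σ : ℝ) (hσ : 0 < σ) (k : ℕ) {a₁ a₂ : ℝ} (h1 : 0 < a₁) (h12 : a₁ ≤ a₂) :
    ∫ u in a₁..a₂, u ^ k * Real.exp (-u ^ 2 / (2 * σ ^ 2))
      = σ ^ (k + 1) * (2:ℝ) ^ (((k:ℝ) - 1) / 2) *
        (lowerGamma (((k:ℝ) + 1) / 2) (a₂ ^ 2 / (2 * σ ^ 2))
          - lowerGamma (((k:ℝ) + 1) / 2) (a₁ ^ 2 / (2 * σ ^ 2))) := by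
  set r : ℝ := ((k:ℝ) - 1) / 2 with hrdef
  have hr : (-1:ℝ) < r := by
    have : (0:ℝ) ≤ (k:ℝ) := Nat.cast_nonneg k
    rw [hrdef]; linarith
  have hs : ((k:ℝ) + 1) / 2 - 1 = r := by rw [hrdef]; ring
  have h2σ : (0:ℝ) < 2 * σ ^ 2 := by positivity
  have hx1 : (0:ℝ) ≤ a₁ ^ 2 / (2 * σ ^ 2) := by positivity
  have hx2 : (0:ℝ) ≤ a₂ ^ 2 / (2 * σ ^ 2) := by positivity
  -- gamma difference
  have hgd : lowerGamma (((k:ℝ) + 1) / 2) (a₂ ^ 2 / (2 * σ ^ 2))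
      - lowerGamma (((k:ℝ) + 1) / 2) (a₁ ^ 2 / (2 * σ ^ 2))
      = ∫ t in (a₁ ^ 2 / (2 * σ ^ 2))..(a₂ ^ 2 / (2 * σ ^ 2)), t ^ r * Real.exp (-t) := by
    unfold lowerGamma
    rw [hs]
    exact intervalIntegral.integral_interval_sub_left
      (gammaKernel_intervalIntegrable hr hx2) (gammaKernel_intervalIntegrable hr hx1)
  -- substitution t = u^2/(2σ^2)
  have hsub : (∫ u in a₁..a₂,
        ((fun t : ℝ => t ^ r * Real.exp (-t)) ∘ (fun u : ℝ => u ^ 2 / (2 * σ ^ 2))) u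
          * (u / σ ^ 2))
      = ∫ t in (a₁ ^ 2 / (2 * σ ^ 2))..(a₂ ^ 2 / (2 * σ ^ 2)), t ^ r * Real.exp (-t) := by
    apply intervalIntegral.integral_comp_mul_deriv'
      (f := fun u : ℝ => u ^ 2 / (2 * σ ^ 2)) (f' := fun u : ℝ => u / σ ^ 2)
    · intro x hx
      have h := (hasDerivAt_pow 2 x).div_const (2 * σ ^ 2)
      convert h using 1
      · rfl
      · rfl
      field_simp
      ring
    · exact (continuous_id.div_const _).continuousOn
    · rintro t ⟨u, hu, rfl⟩
      rw [Set.uIcc_of_le h12] at hu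
      have hupos : 0 < u := lt_of_lt_of_le h1 hu.1
      have ht0 : u ^ 2 / (2 * σ ^ 2) ≠ 0 := by positivity
      exact ((Real.continuousAt_rpow_const _ r (Or.inl ht0)).mul
        ((Real.continuous_exp.comp continuous_neg).continuousAt)).continuousWithinAt
  -- pointwise identity
  have key : ∀ u ∈ Set.uIcc a₁ a₂,
      u ^ k * Real.exp (-u ^ 2 / (2 * σ ^ 2))
        = σ ^ (k + 1) * (2:ℝ) ^ r *
          (((fun t : ℝ => t ^ r * Real.exp (-t)) ∘ (fun u : ℝ => u ^ 2 / (2 * σ ^ 2))) u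
            * (u / σ ^ 2)) := by
    intro u hu
    rw [Set.uIcc_of_le h12] at hu
    have hupos : 0 < u := lt_of_lt_of_le h1 hu.1
    simp only [Function.comp]
    rw [neg_div]
    have hfac : σ ^ (k + 1) * (2:ℝ) ^ r * ((u ^ 2 / (2 * σ ^ 2)) ^ r * (u / σ ^ 2)) = u ^ k := by
      have e0 : (u ^ 2 / (2 * σ ^ 2)) ^ r = u ^ ((k:ℝ) - 1) / (σ ^ ((k:ℝ) - 1) * (2:ℝ) ^ r) := by
        rw [Real.div_rpow (by positivity) h2σ.le, Real.mul_rpow (by norm_num) (by positivity),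
          ← Real.rpow_natCast u 2, ← Real.rpow_mul hupos.le,
          ← Real.rpow_natCast σ 2, ← Real.rpow_mul hσ.le]
        have : ((2:ℕ):ℝ) * r = (k:ℝ) - 1 := by push_cast [hrdef]; ring
        rw [this]
        ring
      rw [e0]
      have e1 : u ^ ((k:ℝ) - 1) * u = u ^ k := by
        rw [← Real.rpow_add_one hupos.ne',
          show (k:ℝ) - 1 + 1 = ((k:ℕ):ℝ) by ring, Real.rpow_natCast]
      have e2 : σ ^ (k + 1) = σ ^ ((k:ℝ) - 1) * σ ^ 2 := by
        rw [← Real.rpow_natCast σ (k + 1), show (((k + 1:ℕ)):ℝ) = ((k:ℝ) - 1) + 2 by push_cast; ring,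
          Real.rpow_add hσ, Real.rpow_two, ← Real.rpow_natCast σ 2]
        try norm_num
      rw [← e1, e2]
      have hσr : (0:ℝ) < σ ^ ((k:ℝ) - 1) := Real.rpow_pos_of_pos hσ _
      have h2r : (0:ℝ) < (2:ℝ) ^ r := Real.rpow_pos_of_pos (by norm_num) r
      field_simp
    calc u ^ k * Real.exp (-(u ^ 2 / (2 * σ ^ 2)))
        = (σ ^ (k + 1) * (2:ℝ) ^ r * ((u ^ 2 / (2 * σ ^ 2)) ^ r * (u / σ ^ 2)))
            * Real.exp (-(u ^ 2 / (2 * σ ^ 2))) := by rw [hfac]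
      _ = σ ^ (k + 1) * (2:ℝ) ^ r *
            ((u ^ 2 / (2 * σ ^ 2)) ^ r * Real.exp (-(u ^ 2 / (2 * σ ^ 2))) * (u / σ ^ 2)) := by
          ring
  rw [intervalIntegral.integral_congr key, intervalIntegral.integral_const_mul, hsub, hgd]

/-- For `0 < b < μ`, `σ > 0` and `n : ℕ`,
`∫₀^b uⁿ exp(−(u−μ)²/(2σ²)) du
  = Σ_{k=0}^{n} C(n,k) μ^(n−k) σ^(k+1) 2^((k−1)/2) (−1)^k
    [γ((k+1)/2, μ²/(2σ²)) − γ((k+1)/2, (b−μ)²/(2σ²))]`. -/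
theorem gaussian_moment_mu_big (μ σ b : ℝ) (hb : 0 < b) (hμ : b < μ)
    (hσ : 0 < σ) (n : ℕ) :
    ∫ u in (0:ℝ)..b, u ^ n * Real.exp (-(u - μ) ^ 2 / (2 * σ ^ 2))
      = ∑ k ∈ Finset.range (n + 1),
          (n.choose k : ℝ) * μ ^ (n - k) * σ ^ (k + 1)
            * (2 : ℝ) ^ (((k : ℝ) - 1) / 2) * (-1 : ℝ) ^ k
            * (lowerGamma (((k : ℝ) + 1) / 2) (μ ^ 2 / (2 * σ ^ 2))
               - lowerGamma (((k : ℝ) + 1) / 2) ((b - μ) ^ 2 / (2 * σ ^ 2))) := by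
  have hμ0 : 0 < μ - b := by linarith
  -- substitution t = μ - u
  have h1 : ∫ u in (0:ℝ)..b, u ^ n * Real.exp (-(u - μ) ^ 2 / (2 * σ ^ 2))
      = ∫ t in (μ - b)..μ, (μ - t) ^ n * Real.exp (-t ^ 2 / (2 * σ ^ 2)) := by
    have h := intervalIntegral.integral_comp_sub_left (a := (0:ℝ)) (b := b)
      (fun t => (μ - t) ^ n * Real.exp (-t ^ 2 / (2 * σ ^ 2))) μ
    rw [sub_zero] at h
    rw [← h]
    apply intervalIntegral.integral_congr
    intro u hu
    simp only []
    have e : μ - (μ - u) = u := by ring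
    rw [e]
    congr 2
    ring
  rw [h1]
  -- binomial expansion
  have h2 : ∀ t : ℝ, (μ - t) ^ n * Real.exp (-t ^ 2 / (2 * σ ^ 2))
      = ∑ k ∈ Finset.range (n + 1),
          (n.choose k : ℝ) * μ ^ (n - k) * (-1:ℝ) ^ k
            * (t ^ k * Real.exp (-t ^ 2 / (2 * σ ^ 2))) := by
    intro t
    have hb : (μ - t) ^ n = ∑ k ∈ Finset.range (n + 1), (-t) ^ k * μ ^ (n - k) * n.choose k := by
      rw [← neg_add_eq_sub]
      exact add_pow (-t) μ n
    rw [hb, Finset.sum_mul]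
    apply Finset.sum_congr rfl
    intro k _
    rw [neg_pow]
    ring
  have h3 : ∫ t in (μ - b)..μ, (μ - t) ^ n * Real.exp (-t ^ 2 / (2 * σ ^ 2))
      = ∑ k ∈ Finset.range (n + 1),
          (n.choose k : ℝ) * μ ^ (n - k) * (-1:ℝ) ^ k
            * ∫ t in (μ - b)..μ, t ^ k * Real.exp (-t ^ 2 / (2 * σ ^ 2)) := by
    simp_rw [h2]
    rw [intervalIntegral.integral_finset_sum]
    · apply Finset.sum_congr rfl
      intro k _
      rw [intervalIntegral.integral_const_mul]
    · intro k _
      apply Continuous.intervalIntegrable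
      fun_prop
  rw [h3]
  apply Finset.sum_congr rfl
  intro k _
  rw [moment_eq σ hσ k hμ0 (by linarith : μ - b ≤ μ)]
  have : (b - μ) ^ 2 = (μ - b) ^ 2 := by ring
  rw [this]
  ring
end
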